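/- Let (λ_i) be a nondecreasing sequence of positive reals and q/p ≥ 0. For any nonnegative reals x_1 ≥ ... ≥ x_n with (Σ_{k=1}^n x_k/λ_k)^{1/p} ≤ V, one has Σ_{k=1}^n x_k^{q/p} ≤ V^q · max_{1 ≤ k ≤ n} k/(Σ_{i=1}^k 1/λ_i)^{q/p}. -/

import Mathlib

open Finset

/-- Scalar Jensen with total weight at most one. -/
lemma jensen_aux {ι : Type*} (s : Finset ι) (t y : ι → ℝ)
    (ht0 : ∀ i ∈ s, 0 ≤ t i) (hts : ∑ i ∈ s, t i ≤ 1)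
    (hy : ∀ i ∈ s, 0 ≤ y i) {r : ℝ} (hr : 1 ≤ r) :
    (∑ i ∈ s, t i * y i) ^ r ≤ ∑ i ∈ s, t i * y i ^ r := by
  set T : ℝ := ∑ i ∈ s, t i with hT
  have hT0 : 0 ≤ T := Finset.sum_nonneg ht0
  rcases eq_or_lt_of_le hT0 with hT0' | hTpos
  · have hzero : ∀ i ∈ s, t i = 0 :=
      (Finset.sum_eq_zero_iff_of_nonneg ht0).1 hT0'.symm
    have h1 : ∑ i ∈ s, t i * y i = 0 :=
      Finset.sum_eq_zero fun i hi => by rw [hzero i hi, zero_mul]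
    have h2 : ∑ i ∈ s, t i * y i ^ r = 0 :=
      Finset.sum_eq_zero fun i hi => by rw [hzero i hi, zero_mul]
    rw [h1, h2, Real.zero_rpow (by positivity)]
  · have hTne : T ≠ 0 := ne_of_gt hTpos
    have key := Real.rpow_arith_mean_le_arith_mean_rpow s (fun i => t i / T) y
      (fun i hi => div_nonneg (ht0 i hi) hT0) (by
        rw [← Finset.sum_div]; exact div_self hTne) hy hr
    have h1 : ∑ i ∈ s, (t i / T) * y i = (∑ i ∈ s, t i * y i) / T := by
      rw [Finset.sum_div]; exact Finset.sum_congr rfl fun i _ => by ring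
    have h2 : ∑ i ∈ s, (t i / T) * y i ^ r = (∑ i ∈ s, t i * y i ^ r) / T := by
      rw [Finset.sum_div]; exact Finset.sum_congr rfl fun i _ => by ring
    rw [h1, h2] at key
    have hsum0 : 0 ≤ ∑ i ∈ s, t i * y i :=
      Finset.sum_nonneg fun i hi => mul_nonneg (ht0 i hi) (hy i hi)
    have hsumr0 : 0 ≤ ∑ i ∈ s, t i * y i ^ r :=
      Finset.sum_nonneg fun i hi => mul_nonneg (ht0 i hi) (Real.rpow_nonneg (hy i hi) r)
    calc (∑ i ∈ s, t i * y i) ^ r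
        = (T * ((∑ i ∈ s, t i * y i) / T)) ^ r := by
          rw [mul_div_cancel₀ _ hTne]
      _ = T ^ r * ((∑ i ∈ s, t i * y i) / T) ^ r := by
          rw [Real.mul_rpow hT0 (div_nonneg hsum0 hT0)]
      _ ≤ T ^ r * ((∑ i ∈ s, t i * y i ^ r) / T) :=
          mul_le_mul_of_nonneg_left key (Real.rpow_nonneg hT0 r)
      _ = T ^ (r - 1) * (∑ i ∈ s, t i * y i ^ r) := by
          rw [Real.rpow_sub hTpos, Real.rpow_one]; ring
      _ ≤ 1 * (∑ i ∈ s, t i * y i ^ r) :=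
          mul_le_mul_of_nonneg_right (Real.rpow_le_one hT0 hts (by linarith)) hsumr0
      _ = ∑ i ∈ s, t i * y i ^ r := one_mul _

/-- Dependent double sum swap. -/
lemma swap_aux (n : ℕ) (g : ℕ → ℕ → ℝ) :
    ∑ k ∈ Finset.range n, ∑ j ∈ Finset.Ico k n, g k j
      = ∑ j ∈ Finset.range n, ∑ k ∈ Finset.range (j + 1), g k j := by
  have h1 : ∀ k ∈ Finset.range n, ∑ j ∈ Finset.Ico k n, g k j
      = ∑ j ∈ Finset.range n, if k ≤ j then g k j else 0 := by
    intro k _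
    rw [← Finset.sum_filter]
    congr 1
    ext j
    simp only [Finset.mem_Ico, Finset.mem_filter, Finset.mem_range]
    omega
  rw [Finset.sum_congr rfl h1, Finset.sum_comm]
  refine Finset.sum_congr rfl fun j hj => ?_
  rw [← Finset.sum_filter]
  congr 1
  ext k
  simp only [Finset.mem_filter, Finset.mem_range] at *
  omega

/-- Core extremal inequality. -/
lemma core_aux (r : ℝ) (hr : 0 < r) (n : ℕ) (hn : 1 ≤ n)
    (w : ℕ → ℝ) (hwpos : ∀ i, 0 < w i) (hwanti : ∀ i j : ℕ, i ≤ j → w j ≤ w i)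
    (X : ℕ → ℝ) (hX0 : ∀ i, 0 ≤ X i) (hXanti : ∀ i j : ℕ, i ≤ j → X j ≤ X i)
    (hXzero : ∀ i, n ≤ i → X i = 0)
    (M : ℝ)
    (hM : ∀ k : ℕ, 1 ≤ k → k ≤ n →
      (k : ℝ) / (∑ i ∈ Finset.range k, w i) ^ r ≤ M) :
    ∑ i ∈ Finset.range n, X i ^ r
      ≤ M * (∑ i ∈ Finset.range n, w i * X i) ^ r := by
  set A : ℝ := ∑ i ∈ Finset.range n, w i * X i with hA
  have hA0 : 0 ≤ A :=
    Finset.sum_nonneg fun i _ => mul_nonneg (hwpos i).le (hX0 i)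
  set Sf : ℕ → ℝ := fun k => ∑ i ∈ Finset.range k, w i with hSf
  have hSpos : ∀ k : ℕ, 1 ≤ k → 0 < Sf k := by
    intro k hk
    exact Finset.sum_pos (fun i _ => hwpos i) (by simp [Finset.nonempty_range_iff]; omega)
  have hSn := hSpos n hn
  rcases le_or_gt r 1 with hr1 | hr1
  · -- concave case
    have hrr : (1:ℝ) ≤ 1 / r := by
      rw [le_div_iff₀ hr]; linarith
    have cheb : Sf n * (∑ i ∈ Finset.range n, X i ^ r)
        ≤ (n : ℝ) * ∑ i ∈ Finset.range n, w i * X i ^ r := by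
      have hmono : MonovaryOn w (fun i => X i ^ r) (Finset.range n) := by
        intro i _ j _ hij
        simp only at hij
        have hji : j < i := by
          by_contra h
          push_neg at h
          exact absurd (Real.rpow_le_rpow (hX0 j) (hXanti i j h) hr.le) (not_le.mpr hij)
        exact hwanti j i hji.le
      have := hmono.sum_mul_sum_le_card_mul_sum
      simpa [Finset.card_range] using this
    have jensen : ∑ i ∈ Finset.range n, w i * X i ^ r ≤ Sf n * (A / Sf n) ^ r := by
      have key := Real.arith_mean_le_rpow_mean (Finset.range n)
        (fun i => w i / Sf n) (fun i => X i ^ r)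
        (fun i _ => div_nonneg (hwpos i).le hSn.le)
        (by rw [← Finset.sum_div]; exact div_self hSn.ne')
        (fun i _ => Real.rpow_nonneg (hX0 i) r) hrr
      have h1 : ∀ i ∈ Finset.range n, (w i / Sf n) * (X i ^ r) ^ (1 / r)
          = (w i * X i) / Sf n := by
        intro i _
        rw [← Real.rpow_mul (hX0 i), mul_one_div_cancel hr.ne', Real.rpow_one]
        ring
      rw [Finset.sum_congr rfl h1, one_div_one_div, ← Finset.sum_div, ← hA] at key
      have h2 : ∑ i ∈ Finset.range n, (w i / Sf n) * X i ^ r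
          = (∑ i ∈ Finset.range n, w i * X i ^ r) / Sf n := by
        rw [Finset.sum_div]; exact Finset.sum_congr rfl fun i _ => by ring
      rw [h2] at key
      calc ∑ i ∈ Finset.range n, w i * X i ^ r
          = Sf n * ((∑ i ∈ Finset.range n, w i * X i ^ r) / Sf n) := by
            field_simp
        _ ≤ Sf n * (A / Sf n) ^ r := mul_le_mul_of_nonneg_left key hSn.le
    have step : ∑ i ∈ Finset.range n, X i ^ r ≤ (n : ℝ) * (A / Sf n) ^ r := by
      have h3 : Sf n * (∑ i ∈ Finset.range n, X i ^ r)
          ≤ Sf n * ((n : ℝ) * (A / Sf n) ^ r) := by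
        calc Sf n * (∑ i ∈ Finset.range n, X i ^ r)
            ≤ (n : ℝ) * ∑ i ∈ Finset.range n, w i * X i ^ r := cheb
          _ ≤ (n : ℝ) * (Sf n * (A / Sf n) ^ r) := by
              refine mul_le_mul_of_nonneg_left jensen ?_
              positivity
          _ = Sf n * ((n : ℝ) * (A / Sf n) ^ r) := by ring
      exact (mul_le_mul_iff_right₀ hSn).1 h3
    calc ∑ i ∈ Finset.range n, X i ^ r
        ≤ (n : ℝ) * (A / Sf n) ^ r := step
      _ = ((n : ℝ) / Sf n ^ r) * A ^ r := by
          rw [Real.div_rpow hA0 hSn.le]; ring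
      _ ≤ M * A ^ r :=
          mul_le_mul_of_nonneg_right (hM n hn le_rfl) (Real.rpow_nonneg hA0 r)
  · -- convex case
    have hMpos : 0 < M := by
      refine lt_of_lt_of_le ?_ (hM n hn le_rfl)
      have hnn : (0:ℝ) < n := by exact_mod_cast hn
      exact div_pos hnn (Real.rpow_pos_of_pos hSn r)
    rcases eq_or_lt_of_le hA0 with hA0' | hApos
    · -- A = 0
      have hzero : ∀ i ∈ Finset.range n, w i * X i = 0 :=
        (Finset.sum_eq_zero_iff_of_nonneg
          (fun i _ => mul_nonneg (hwpos i).le (hX0 i))).1 hA0'.symm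
      have h1 : ∑ i ∈ Finset.range n, X i ^ r = 0 := by
        refine Finset.sum_eq_zero fun i hi => ?_
        rcases mul_eq_zero.1 (hzero i hi) with h | h
        · exact absurd h (hwpos i).ne'
        · rw [h, Real.zero_rpow hr.ne']
      rw [h1, ← hA0', Real.zero_rpow hr.ne', mul_zero]
    · -- A > 0
      set d : ℕ → ℝ := fun j => X j - X (j + 1) with hd
      have hd0 : ∀ j, 0 ≤ d j := fun j => sub_nonneg.2 (hXanti j (j+1) (Nat.le_succ j))
      have htele : ∀ k, k ≤ n → X k = ∑ j ∈ Finset.Ico k n, d j := by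
        intro k hk
        have h1 : ∑ j ∈ Finset.Ico k n, d j
            = ∑ j ∈ Finset.range n, d j - ∑ j ∈ Finset.range k, d j :=
          Finset.sum_Ico_eq_sub _ hk
        have h2 : ∀ m : ℕ, ∑ j ∈ Finset.range m, d j = X 0 - X m := fun m =>
          Finset.sum_range_sub' X m
        rw [h1, h2, h2, hXzero n le_rfl]
        ring
      have habel : A = ∑ j ∈ Finset.range n, Sf (j + 1) * d j := by
        have h1 : ∀ k ∈ Finset.range n, w k * X k = ∑ j ∈ Finset.Ico k n, w k * d j := by
          intro k hk
          rw [htele k (Finset.mem_range.1 hk).le, Finset.mul_sum]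
        rw [hA, Finset.sum_congr rfl h1, swap_aux]
        refine Finset.sum_congr rfl fun j _ => ?_
        rw [hSf, Finset.sum_mul]
      set t : ℕ → ℝ := fun j => Sf (j + 1) * d j / A with ht
      have ht0 : ∀ j, 0 ≤ t j := fun j =>
        div_nonneg (mul_nonneg (hSpos (j+1) (by omega)).le (hd0 j)) hA0
      have htsum : ∑ j ∈ Finset.range n, t j = 1 := by
        rw [ht, ← Finset.sum_div, ← habel, div_self hApos.ne']
      have hd_eq : ∀ j, d j = t j * (A / Sf (j + 1)) := by
        intro j
        have hSj := hSpos (j+1) (by omega)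
        rw [ht]
        field_simp
      have hy0 : ∀ j : ℕ, 0 ≤ A / Sf (j + 1) := fun j =>
        div_nonneg hA0 (hSpos (j+1) (by omega)).le
      have hsub : ∀ k, ∑ j ∈ Finset.Ico k n, t j ≤ 1 := by
        intro k
        rw [← htsum]
        refine Finset.sum_le_sum_of_subset_of_nonneg ?_ (fun j _ _ => ht0 j)
        intro j hj
        simp only [Finset.mem_Ico, Finset.mem_range] at *
        omega
      calc ∑ k ∈ Finset.range n, X k ^ r
          = ∑ k ∈ Finset.range n,
              (∑ j ∈ Finset.Ico k n, t j * (A / Sf (j + 1))) ^ r := by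
            refine Finset.sum_congr rfl fun k hk => ?_
            rw [htele k (Finset.mem_range.1 hk).le]
            congr 1
            exact Finset.sum_congr rfl fun j _ => hd_eq j
        _ ≤ ∑ k ∈ Finset.range n,
              ∑ j ∈ Finset.Ico k n, t j * (A / Sf (j + 1)) ^ r := by
            refine Finset.sum_le_sum fun k _ => ?_
            exact jensen_aux _ _ _ (fun j _ => ht0 j) (hsub k)
              (fun j _ => hy0 j) hr1.le
        _ = ∑ j ∈ Finset.range n,
              ∑ k ∈ Finset.range (j + 1), t j * (A / Sf (j + 1)) ^ r :=
            swap_aux n _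
        _ = ∑ j ∈ Finset.range n,
              t j * (((j : ℝ) + 1) * (A / Sf (j + 1)) ^ r) := by
            refine Finset.sum_congr rfl fun j _ => ?_
            rw [Finset.sum_const, Finset.card_range, nsmul_eq_mul]
            push_cast; ring
        _ ≤ ∑ j ∈ Finset.range n, t j * (M * A ^ r) := by
            refine Finset.sum_le_sum fun j hj => ?_
            refine mul_le_mul_of_nonneg_left ?_ (ht0 j)
            have hSj := hSpos (j+1) (by omega)
            have hMj := hM (j+1) (by omega)
              (by have := Finset.mem_range.1 hj; omega)
            calc ((j : ℝ) + 1) * (A / Sf (j + 1)) ^ r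
                = (((j : ℕ) + 1 : ℕ) : ℝ) / Sf (j + 1) ^ r * A ^ r := by
                  rw [Real.div_rpow hA0 hSj.le]
                  push_cast; ring
              _ ≤ M * A ^ r :=
                  mul_le_mul_of_nonneg_right hMj (Real.rpow_nonneg hA0 r)
        _ = M * A ^ r := by
            rw [← Finset.sum_mul, htsum, one_mul]

/-- for `(λᵢ)` nondecreasing positive, `p, q ∈ [1, ∞)`, `V > 0`, and
nonincreasing nonnegative reals `x₁ ≥ ⋯ ≥ xₙ` with `(∑ x_k/λ_k)^{1/p} ≤ V`, one has
`∑ x_k^{q/p} ≤ V^q · max_{1 ≤ k ≤ n} k/(∑_{i=1}^k 1/λᵢ)^{q/p}`. -/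
theorem stmt16 (p q V : ℝ) (hp : 1 ≤ p) (hq : 1 ≤ q) (hV : 0 < V)
    (Λ : ℕ → ℝ) (hΛpos : ∀ i, 0 < Λ i) (hΛmono : Monotone Λ)
    (n : ℕ) (hn : 1 ≤ n) (x : Fin n → ℝ) (hx0 : ∀ i, 0 ≤ x i)
    (hxmono : ∀ i j : Fin n, i ≤ j → x j ≤ x i)
    (hcon : (∑ i, x i / Λ (i : ℕ)) ^ (1 / p) ≤ V) :
    (∑ i, (x i) ^ (q / p)) ≤
      V ^ q * sSup {v : ℝ | ∃ k : ℕ, 1 ≤ k ∧ k ≤ n ∧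
        v = (k : ℝ) / (∑ i ∈ Finset.range k, 1 / Λ i) ^ (q / p)} := by
  have hp0 : 0 < p := lt_of_lt_of_le one_pos hp
  have hq0 : 0 < q := lt_of_lt_of_le one_pos hq
  set r : ℝ := q / p with hr_def
  have hr : 0 < r := div_pos hq0 hp0
  set w : ℕ → ℝ := fun i => 1 / Λ i with hw
  have hwpos : ∀ i, 0 < w i := fun i => one_div_pos.mpr (hΛpos i)
  have hwanti : ∀ i j : ℕ, i ≤ j → w j ≤ w i := fun i j hij =>
    one_div_le_one_div_of_le (hΛpos i) (hΛmono hij)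
  set X : ℕ → ℝ := fun i => if h : i < n then x ⟨i, h⟩ else 0 with hX
  have hX0 : ∀ i, 0 ≤ X i := by
    intro i
    simp only [hX]
    split
    · exact hx0 _
    · exact le_refl 0
  have hXanti : ∀ i j : ℕ, i ≤ j → X j ≤ X i := by
    intro i j hij
    by_cases hj : j < n
    · have hi : i < n := lt_of_le_of_lt hij hj
      simp only [hX, dif_pos hi, dif_pos hj]
      exact hxmono ⟨i, hi⟩ ⟨j, hj⟩ (Fin.mk_le_mk.mpr hij)
    · have hzj : X j = 0 := by simp only [hX, dif_neg hj]
      rw [hzj]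
      exact hX0 i
  have hXzero : ∀ i, n ≤ i → X i = 0 := by
    intro i hi
    simp only [hX]
    rw [dif_neg (by omega)]
  set Mset : Set ℝ := {v : ℝ | ∃ k : ℕ, 1 ≤ k ∧ k ≤ n ∧
    v = (k : ℝ) / (∑ i ∈ Finset.range k, 1 / Λ i) ^ (q / p)} with hMset
  set M : ℝ := sSup Mset with hMdef
  have hbdd : BddAbove Mset := by
    refine Set.Finite.bddAbove ?_
    refine Set.Finite.subset (Set.Finite.image
      (fun k : ℕ => (k : ℝ) / (∑ i ∈ Finset.range k, 1 / Λ i) ^ (q / p))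
      (Set.finite_Icc 1 n)) ?_
    rintro v ⟨k, h1, h2, rfl⟩
    exact ⟨k, ⟨h1, h2⟩, rfl⟩
  have hM : ∀ k : ℕ, 1 ≤ k → k ≤ n →
      (k : ℝ) / (∑ i ∈ Finset.range k, w i) ^ r ≤ M := by
    intro k h1 h2
    exact le_csSup hbdd ⟨k, h1, h2, rfl⟩
  have key := core_aux r hr n hn w hwpos hwanti X hX0 hXanti hXzero M hM
  have hsum1 : ∑ i, (x i) ^ (q / p) = ∑ i ∈ Finset.range n, X i ^ r := by
    rw [← Fin.sum_univ_eq_sum_range (fun i => X i ^ r) n]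
    refine Finset.sum_congr rfl fun i _ => ?_
    simp only [hX]
    rw [dif_pos i.isLt]
  have hsum2 : (∑ i, x i / Λ (i : ℕ)) = ∑ i ∈ Finset.range n, w i * X i := by
    rw [← Fin.sum_univ_eq_sum_range (fun i => w i * X i) n]
    refine Finset.sum_congr rfl fun i _ => ?_
    simp only [hX, hw]
    rw [dif_pos i.isLt]
    rw [div_eq_mul_inv, one_div, mul_comm]
  set A : ℝ := ∑ i, x i / Λ (i : ℕ) with hA
  have hA0 : 0 ≤ A :=
    Finset.sum_nonneg fun i _ => div_nonneg (hx0 i) (hΛpos i).le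
  have hA_le : A ≤ V ^ p := by
    have h1 : (A ^ (1 / p)) ^ p = A := by
      rw [← Real.rpow_mul hA0, one_div_mul_cancel hp0.ne', Real.rpow_one]
    calc A = (A ^ (1 / p)) ^ p := h1.symm
      _ ≤ V ^ p := Real.rpow_le_rpow (Real.rpow_nonneg hA0 _) hcon hp0.le
  have hAr : A ^ r ≤ V ^ q := by
    calc A ^ r ≤ (V ^ p) ^ r :=
          Real.rpow_le_rpow hA0 hA_le hr.le
      _ = V ^ (p * r) := by rw [← Real.rpow_mul hV.le]
      _ = V ^ q := by
          congr 1
          rw [hr_def]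
          field_simp
  have hM0 : 0 ≤ M := by
    refine le_trans ?_ (hM n hn le_rfl)
    exact div_nonneg (Nat.cast_nonneg n)
      (Real.rpow_nonneg (Finset.sum_nonneg fun i _ => (hwpos i).le) r)
  calc (∑ i, (x i) ^ (q / p))
      = ∑ i ∈ Finset.range n, X i ^ r := hsum1
    _ ≤ M * (∑ i ∈ Finset.range n, w i * X i) ^ r := key
    _ = M * A ^ r := by rw [← hsum2]
    _ ≤ M * V ^ q := mul_le_mul_of_nonneg_left hAr hM0
    _ = V ^ q * M := mul_comm _ _
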